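/- Let (Ω, ℱ, P) be a probability space carrying random variables T : Ω → {0,1}, X : Ω → ℝ^{r₁}, and potential outcomes Y₁, Y₀ : Ω → ℝ, and let the observed outcome be Y = T·Y₁ + (1−T)·Y₀. Assume: (i) the pair (Y₁, Y₀) is conditionally independent of T given the σ-algebra σ(X); (ii) e is a version of the conditional expectation E[T | σ(X)] with 0 < e < 1 almost surely; (iii) Y₁, Y₀, T·Y/e, and (1−T)·Y/(1−e) are integrable. Then E[Y₁] = E[ T·Y / e ] and E[Y₀] = E[ (1−T)·Y / (1−e) ]. -/

import Mathlib

open MeasureTheory ProbabilityTheory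

open scoped ENNReal

/-- Auxiliary lemma: if `A` is conditionally independent of `W` given `m` (expressed at the
level of conditional expectations of indicator products), and `g := P⟦A|m⟧` is a.e. positive,
then `∫_A W/g dP = ∫ W dP`. -/
lemma aux_ipw {Ω : Type*} {m : MeasurableSpace Ω} [m0 : MeasurableSpace Ω] (hm : m ≤ m0)
    (P : Measure Ω) [IsProbabilityMeasure P]
    (A : Set Ω) (hA : MeasurableSet A)
    (W : Ω → ℝ) (hW : Measurable W)
    (hCI : ∀ u : Set ℝ, MeasurableSet u →
      (P⟦W ⁻¹' u ∩ A | m⟧) =ᵐ[P] fun ω => (P⟦W ⁻¹' u | m⟧) ω * (P⟦A | m⟧) ω)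
    (hgpos : ∀ᵐ ω ∂P, 0 < (P⟦A | m⟧) ω) :
    ∫ ω in A, W ω / (P⟦A | m⟧) ω ∂P = ∫ ω, W ω ∂P := by
  set g : Ω → ℝ := P⟦A | m⟧ with hg_def
  have hg_sm : StronglyMeasurable[m] g := stronglyMeasurable_condExp
  have hg_meas0 : Measurable g := hg_sm.measurable.mono hm le_rfl
  have hg_nonneg : 0 ≤ᵐ[P] g :=
    condExp_nonneg (Filter.Eventually.of_forall fun ω =>
      Set.indicator_nonneg (fun _ _ => zero_le_one) ω)
  have hg_le_one : g ≤ᵐ[P] fun _ => (1 : ℝ) := by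
    have h1 := condExp_mono (μ := P) (m := m) ((integrable_const (1:ℝ)).indicator hA)
      (integrable_const (1:ℝ))
      (Filter.Eventually.of_forall fun ω => Set.indicator_le_self' (fun _ _ => zero_le_one) ω)
    have h3 : P[fun _ => (1:ℝ) | m] = fun _ => (1:ℝ) := condExp_const (μ := P) hm (1:ℝ)
    rw [h3] at h1
    exact h1
  have hg_int : Integrable g P := integrable_condExp
  -- the with-density measure
  set ν : Measure Ω := P.withDensity (fun ω => ((g ω).toNNReal : ℝ≥0∞)) with hν_def
  have hwd : ∫ ω, W ω / g ω ∂ν = ∫ ω, ((g ω).toNNReal : ℝ) • (W ω / g ω) ∂P := by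
    have hf_meas : Measurable fun ω => (g ω).toNNReal := measurable_real_toNNReal.comp hg_meas0
    rw [hν_def, integral_withDensity_eq_integral_smul hf_meas (fun ω => W ω / g ω)]
    simp [NNReal.smul_def]
  -- Key 1 : the two measures agree on the π-system
  have key1 : ∀ u : Set ℝ, MeasurableSet u → ∀ s : Set Ω, MeasurableSet[m] s →
      P.restrict A (W ⁻¹' u ∩ s) = ν (W ⁻¹' u ∩ s) := by
    intro u hu s hs
    set B : Set Ω := W ⁻¹' u with hB_def
    have hB : MeasurableSet B := hW hu
    have hs0 : MeasurableSet s := hm s hs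
    have hBs : MeasurableSet (B ∩ s) := hB.inter hs0
    have hb_int : Integrable (B.indicator fun _ => (1:ℝ)) P :=
      (integrable_const (1:ℝ)).indicator hB
    have hBA_int : Integrable ((B ∩ A).indicator fun _ => (1:ℝ)) P :=
      (integrable_const (1:ℝ)).indicator (hB.inter hA)
    have hL : P.restrict A (B ∩ s) = P ((B ∩ s) ∩ A) := Measure.restrict_apply hBs
    -- the main real-valued computation
    have key : (P ((B ∩ s) ∩ A)).toReal = ∫ ω in B ∩ s, g ω ∂P := by
      have h1 : ∫ ω in s, ((B ∩ A).indicator (fun _ => (1:ℝ))) ω ∂P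
          = (P ((B ∩ s) ∩ A)).toReal := by
        rw [setIntegral_indicator (hB.inter hA), setIntegral_const, smul_eq_mul, mul_one,
          show s ∩ (B ∩ A) = (B ∩ s) ∩ A from by
            ext ω; simp only [Set.mem_inter_iff]; tauto, measureReal_def]
      have h2 : ∫ ω in s, (P⟦B ∩ A | m⟧) ω ∂P
          = ∫ ω in s, ((B ∩ A).indicator fun _ => (1:ℝ)) ω ∂P :=
        setIntegral_condExp hm hBA_int hs
      have h3 : ∫ ω in s, (P⟦B ∩ A | m⟧) ω ∂P = ∫ ω in s, (P⟦B | m⟧) ω * g ω ∂P :=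
        integral_congr_ae (ae_restrict_of_ae (hCI u hu))
      set h : Ω → ℝ := fun ω => s.indicator (fun _ => (1:ℝ)) ω * g ω with hh_def
      have hh_sm : StronglyMeasurable[m] h :=
        (stronglyMeasurable_const.indicator hs).mul hg_sm
      have hh_meas0 : Measurable h :=
        (measurable_const.indicator hs0).mul hg_meas0
      have hbd : ∀ᵐ ω ∂P, ‖h ω * (B.indicator (fun _ => (1:ℝ))) ω‖ ≤ 1 := by
        filter_upwards [hg_nonneg, hg_le_one] with ω h0 h1'
        have ha0 : (0:ℝ) ≤ s.indicator (fun _ => (1:ℝ)) ω := by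
          by_cases hωs : ω ∈ s <;> simp [Set.indicator_apply, hωs]
        have ha1 : s.indicator (fun _ => (1:ℝ)) ω ≤ 1 := by
          by_cases hωs : ω ∈ s <;> simp [Set.indicator_apply, hωs]
        have hc0 : (0:ℝ) ≤ B.indicator (fun _ => (1:ℝ)) ω := by
          by_cases hωB : ω ∈ B <;> simp [Set.indicator_apply, hωB]
        have hc1 : B.indicator (fun _ => (1:ℝ)) ω ≤ 1 := by
          by_cases hωB : ω ∈ B <;> simp [Set.indicator_apply, hωB]
        have h0' : (0:ℝ) ≤ g ω := h0
        have h1'' : g ω ≤ 1 := h1'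
        show ‖(s.indicator (fun _ => (1:ℝ)) ω * g ω) * B.indicator (fun _ => (1:ℝ)) ω‖ ≤ 1
        have hab0 : (0:ℝ) ≤ s.indicator (fun _ => (1:ℝ)) ω * g ω := mul_nonneg ha0 h0'
        have hab1 : s.indicator (fun _ => (1:ℝ)) ω * g ω ≤ 1 := by nlinarith
        rw [Real.norm_eq_abs, abs_of_nonneg (mul_nonneg hab0 hc0)]
        nlinarith
      have hprod_int : Integrable (fun ω => h ω * (B.indicator fun _ => (1:ℝ)) ω) P :=
        Integrable.mono' (integrable_const (1:ℝ))
          ((hh_meas0.mul (measurable_const.indicator hB)).aestronglyMeasurable) hbd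
      have h4 : P[fun ω => h ω * (B.indicator fun _ => (1:ℝ)) ω | m]
          =ᵐ[P] fun ω => h ω * (P⟦B | m⟧) ω :=
        condExp_mul_of_stronglyMeasurable_left hh_sm hprod_int hb_int
      have h5 : ∫ ω, h ω * (B.indicator fun _ => (1:ℝ)) ω ∂P
          = ∫ ω, h ω * (P⟦B | m⟧) ω ∂P := by
        rw [← integral_condExp hm (f := fun ω => h ω * (B.indicator fun _ => (1:ℝ)) ω)]
        exact integral_congr_ae h4
      have h6 : ∫ ω, h ω * (B.indicator fun _ => (1:ℝ)) ω ∂P = ∫ ω in B ∩ s, g ω ∂P := by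
        rw [← integral_indicator hBs]
        apply integral_congr_ae
        apply Filter.Eventually.of_forall
        intro ω
        by_cases hωB : ω ∈ B <;> by_cases hωs : ω ∈ s <;>
          simp [hh_def, Set.indicator_apply, hωB, hωs]
      have h7 : ∫ ω, h ω * (P⟦B | m⟧) ω ∂P = ∫ ω in s, (P⟦B | m⟧) ω * g ω ∂P := by
        rw [← integral_indicator hs0]
        apply integral_congr_ae
        apply Filter.Eventually.of_forall
        intro ω
        by_cases hωs : ω ∈ s <;> simp [hh_def, Set.indicator_apply, hωs] <;> ring
      rw [← h1, ← h2, h3, ← h7, ← h5, h6]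
    have hν : ν (B ∩ s) = ENNReal.ofReal (∫ ω in B ∩ s, g ω ∂P) := by
      rw [hν_def, withDensity_apply _ hBs]
      have hcoe : ∀ a : Ω, ((g a).toNNReal : ℝ≥0∞) = ENNReal.ofReal (g a) := fun a => rfl
      simp_rw [hcoe]
      rw [← ofReal_integral_eq_lintegral_ofReal (hg_int.restrict)
        (ae_restrict_of_ae hg_nonneg)]
    rw [hL, hν, ← key, ENNReal.ofReal_toReal (measure_ne_top _ _)]
  -- ν is a finite measure
  have hν_univ : P.restrict A Set.univ = ν Set.univ := by
    have := key1 Set.univ MeasurableSet.univ Set.univ MeasurableSet.univ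
    simpa using this
  have hν_fin : IsFiniteMeasure ν := by
    constructor
    rw [← hν_univ]
    exact measure_lt_top _ _
  -- Key 2 : the two measures agree on σ(W) ⊔ m
  set σ₂ : MeasurableSpace Ω := MeasurableSpace.comap W inferInstance ⊔ m with hσ₂_def
  have hσ₂ : σ₂ ≤ m0 := sup_le hW.comap_le hm
  set C : Set (Set Ω) :=
    {c | ∃ u : Set ℝ, MeasurableSet u ∧ ∃ s : Set Ω, MeasurableSet[m] s ∧ c = W ⁻¹' u ∩ s}
    with hC_def
  have hgen : σ₂ = MeasurableSpace.generateFrom C := by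
    apply le_antisymm
    · apply sup_le
      · rintro _ ⟨u, hu, rfl⟩
        exact MeasurableSpace.measurableSet_generateFrom
          ⟨u, hu, Set.univ, MeasurableSet.univ, by simp⟩
      · intro s hs
        exact MeasurableSpace.measurableSet_generateFrom
          ⟨Set.univ, MeasurableSet.univ, s, hs, by simp⟩
    · apply MeasurableSpace.generateFrom_le
      rintro _ ⟨u, hu, s, hs, rfl⟩
      exact MeasurableSet.inter (le_sup_left (α := MeasurableSpace Ω) _ ⟨u, hu, rfl⟩)
        (le_sup_right (α := MeasurableSpace Ω) _ (hs))
  have hpi : IsPiSystem C := by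
    rintro _ ⟨u₁, hu₁, s₁, hs₁, rfl⟩ _ ⟨u₂, hu₂, s₂, hs₂, rfl⟩ -
    refine ⟨u₁ ∩ u₂, hu₁.inter hu₂, s₁ ∩ s₂, hs₁.inter hs₂, ?_⟩
    rw [Set.preimage_inter]
    ext ω; simp only [Set.mem_inter_iff]; tauto
  have key2 : ∀ c : Set Ω, MeasurableSet[σ₂] c → P.restrict A c = ν c := by
    intro c hc
    refine MeasurableSpace.induction_on_inter (m := σ₂) (C := fun c _ => P.restrict A c = ν c) hgen hpi ?_ ?_ ?_ ?_ c hc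
    · simp
    · rintro _ ⟨u, hu, s, hs, rfl⟩
      exact key1 u hu s hs
    · intro t ht hQt
      have ht0 : MeasurableSet[m0] t := hσ₂ t ht
      rw [measure_compl ht0 (measure_ne_top _ _), measure_compl ht0 (measure_ne_top _ _),
        hν_univ, hQt]
    · intro f hdisj hfm hQ
      have hfm0 : ∀ i, MeasurableSet[m0] (f i) := fun i => hσ₂ _ (hfm i)
      rw [measure_iUnion hdisj hfm0, measure_iUnion hdisj hfm0]
      exact tsum_congr hQ
  -- conclude by integrating W/g against both measures
  have hφ_meas : Measurable[σ₂] fun ω => W ω / g ω := by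
    have hWσ : Measurable[σ₂] W := by
      rw [hσ₂_def]
      exact measurable_iff_comap_le.mpr le_sup_left
    have hgσ : Measurable[σ₂] g := hg_sm.measurable.mono (le_sup_right.trans_eq hσ₂_def.symm) le_rfl
    exact hWσ.div hgσ
  have hφ_sm : StronglyMeasurable[σ₂] fun ω => W ω / g ω := by
    exact hφ_meas.stronglyMeasurable
  have htrim_eq : (P.restrict A).trim hσ₂ = ν.trim hσ₂ := by
    apply Measure.ext
    intro t ht
    rw [trim_measurableSet_eq hσ₂ ht, trim_measurableSet_eq hσ₂ ht]
    exact key2 t ht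
  calc ∫ ω in A, W ω / g ω ∂P
      = ∫ ω, W ω / g ω ∂((P.restrict A).trim hσ₂) := integral_trim hσ₂ hφ_sm
    _ = ∫ ω, W ω / g ω ∂(ν.trim hσ₂) := by rw [htrim_eq]
    _ = ∫ ω, W ω / g ω ∂ν := (integral_trim hσ₂ hφ_sm).symm
    _ = ∫ ω, ((g ω).toNNReal : ℝ) • (W ω / g ω) ∂P := hwd
    _ = ∫ ω, W ω ∂P := by
        apply integral_congr_ae
        filter_upwards [hgpos] with ω hω
        rw [smul_eq_mul, Real.coe_toNNReal _ hω.le]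
        field_simp

lemma aux_ipw2 {Ω : Type*} {m : MeasurableSpace Ω} [MeasurableSpace Ω] [StandardBorelSpace Ω]
    (hm : m ≤ ‹MeasurableSpace Ω›)
    (P : Measure Ω) [IsProbabilityMeasure P]
    (T Y₁ Y₀ : Ω → ℝ)
    (hT : Measurable T) (hY₁ : Measurable Y₁) (hY₀ : Measurable Y₀)
    (hTbin : ∀ ω, T ω = 0 ∨ T ω = 1)
    (Y : Ω → ℝ) (hY : ∀ ω, Y ω = T ω * Y₁ ω + (1 - T ω) * Y₀ ω)
    (hindep : CondIndepFun m hm (fun ω => (Y₁ ω, Y₀ ω)) T P)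
    (e : Ω → ℝ)
    (he : e =ᵐ[P] P[T | m])
    (hpos : ∀ᵐ ω ∂P, 0 < e ω ∧ e ω < 1) :
    (∫ ω, Y₁ ω ∂P = ∫ ω, T ω * Y ω / e ω ∂P) ∧
    (∫ ω, Y₀ ω ∂P = ∫ ω, (1 - T ω) * Y ω / (1 - e ω) ∂P) := by
  -- treated / control sets
  set A₁ : Set Ω := T ⁻¹' {1} with hA₁_def
  set A₀ : Set Ω := T ⁻¹' {0} with hA₀_def
  have hA₁ : MeasurableSet A₁ := hT (measurableSet_singleton 1)
  have hA₀ : MeasurableSet A₀ := hT (measurableSet_singleton 0)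
  have hTind : T = A₁.indicator (fun _ => (1:ℝ)) := by
    funext ω
    rcases hTbin ω with h | h <;>
      simp [Set.indicator_apply, hA₁_def, Set.mem_preimage, h]
  have h0ind : (fun ω => 1 - T ω) = A₀.indicator (fun _ => (1:ℝ)) := by
    funext ω
    rcases hTbin ω with h | h <;>
      simp [Set.indicator_apply, hA₀_def, Set.mem_preimage, h]
  have hTint : Integrable T P := by
    rw [hTind]; exact (integrable_const (1:ℝ)).indicator hA₁
  -- identification of e with the conditional probabilities
  have hcond₁ : P[T | m] = P⟦A₁ | m⟧ := by rw [hTind]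
  have he₁ : e =ᵐ[P] P⟦A₁ | m⟧ := by rw [← hcond₁]; exact he
  have he₀ : (fun ω => 1 - e ω) =ᵐ[P] P⟦A₀ | m⟧ := by
    have h1 : P⟦A₀ | m⟧ = P[fun ω => 1 - T ω | m] := by rw [h0ind]
    have h2 : P[fun ω => 1 - T ω | m] =ᵐ[P] fun ω => (P[fun _ => (1:ℝ) | m]) ω - (P[T | m]) ω := by
      have := condExp_sub (μ := P) (m := m) (integrable_const (1:ℝ)) hTint
      filter_upwards [this] with ω hω using hω
    have h3 : P[fun _ => (1:ℝ) | m] = fun _ => (1:ℝ) := condExp_const (μ := P) hm (1:ℝ)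
    rw [h1]
    filter_upwards [h2, he] with ω hω h'ω
    rw [hω, h3, h'ω]
  -- positivity
  have hpos₁ : ∀ᵐ ω ∂P, 0 < (P⟦A₁ | m⟧) ω := by
    filter_upwards [hpos, he₁] with ω h1 h2
    rw [← h2]; exact h1.1
  have hpos₀ : ∀ᵐ ω ∂P, 0 < (P⟦A₀ | m⟧) ω := by
    filter_upwards [hpos, he₀] with ω h1 h2
    rw [← h2]; linarith [h1.2]
  -- conditional independence statements
  have hYT₁ : CondIndepFun m hm Y₁ T P := by
    exact hindep.comp measurable_fst measurable_id
  have hYT₀ : CondIndepFun m hm Y₀ T P := by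
    exact hindep.comp measurable_snd measurable_id
  have hCI₁ : ∀ u : Set ℝ, MeasurableSet u →
      (P⟦Y₁ ⁻¹' u ∩ A₁ | m⟧) =ᵐ[P] fun ω => (P⟦Y₁ ⁻¹' u | m⟧) ω * (P⟦A₁ | m⟧) ω := by
    intro u hu
    exact (condIndepFun_iff_condExp_inter_preimage_eq_mul hY₁ hT).mp hYT₁ u {1} hu
      (measurableSet_singleton 1)
  have hCI₀ : ∀ u : Set ℝ, MeasurableSet u →
      (P⟦Y₀ ⁻¹' u ∩ A₀ | m⟧) =ᵐ[P] fun ω => (P⟦Y₀ ⁻¹' u | m⟧) ω * (P⟦A₀ | m⟧) ω := by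
    intro u hu
    exact (condIndepFun_iff_condExp_inter_preimage_eq_mul hY₀ hT).mp hYT₀ u {0} hu
      (measurableSet_singleton 0)
  constructor
  · -- treated arm
    have haux := aux_ipw hm P A₁ hA₁ Y₁ hY₁ hCI₁ hpos₁
    have hfun : ∀ ω, T ω * Y ω / e ω = A₁.indicator (fun ω => Y₁ ω / e ω) ω := by
      intro ω
      rcases hTbin ω with h | h <;>
        simp [hY ω, Set.indicator_apply, hA₁_def, Set.mem_preimage, h]
    calc ∫ ω, Y₁ ω ∂P = ∫ ω in A₁, Y₁ ω / (P⟦A₁ | m⟧) ω ∂P := haux.symm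
      _ = ∫ ω, A₁.indicator (fun ω => Y₁ ω / (P⟦A₁ | m⟧) ω) ω ∂P :=
          (integral_indicator hA₁).symm
      _ = ∫ ω, T ω * Y ω / e ω ∂P := by
          apply integral_congr_ae
          filter_upwards [he₁] with ω hω
          rw [hfun ω]
          by_cases hωA : ω ∈ A₁ <;> simp [Set.indicator_apply, hωA, hω]
  · -- control arm
    have haux := aux_ipw hm P A₀ hA₀ Y₀ hY₀ hCI₀ hpos₀
    have hfun : ∀ ω, (1 - T ω) * Y ω / (1 - e ω) = A₀.indicator (fun ω => Y₀ ω / (1 - e ω)) ω := by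
      intro ω
      rcases hTbin ω with h | h <;>
        simp [hY ω, Set.indicator_apply, hA₀_def, Set.mem_preimage, h]
    calc ∫ ω, Y₀ ω ∂P = ∫ ω in A₀, Y₀ ω / (P⟦A₀ | m⟧) ω ∂P := haux.symm
      _ = ∫ ω, A₀.indicator (fun ω => Y₀ ω / (P⟦A₀ | m⟧) ω) ω ∂P :=
          (integral_indicator hA₀).symm
      _ = ∫ ω, (1 - T ω) * Y ω / (1 - e ω) ∂P := by
          apply integral_congr_ae
          filter_upwards [he₀] with ω hω
          rw [hfun ω]
          by_cases hωA : ω ∈ A₀ <;> simp [Set.indicator_apply, hωA, ← hω]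

/-- under unconfoundedness and positivity, the average potential outcomes are
identified by inverse probability weighting:
`E[Y(1)] = E[T·Y/e(X)]` and `E[Y(0)] = E[(1−T)·Y/(1−e(X))]`. -/
theorem ipw_identification
    {Ω : Type*} [MeasurableSpace Ω] [StandardBorelSpace Ω] [Nonempty Ω]
    (P : Measure Ω) [IsProbabilityMeasure P]
    (r₁ : ℕ)
    (T : Ω → ℝ) (X : Ω → (Fin r₁ → ℝ)) (Y₁ Y₀ : Ω → ℝ)
    (hT : Measurable T) (hX : Measurable X) (hY₁ : Measurable Y₁) (hY₀ : Measurable Y₀)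
    (hTbin : ∀ ω, T ω = 0 ∨ T ω = 1)
    (Y : Ω → ℝ) (hY : ∀ ω, Y ω = T ω * Y₁ ω + (1 - T ω) * Y₀ ω)
    -- (i) unconfoundedness: (Y₁, Y₀) ⫫ T | σ(X)
    (hindep : CondIndepFun (MeasurableSpace.comap X inferInstance) hX.comap_le
      (fun ω => (Y₁ ω, Y₀ ω)) T P)
    -- (ii) e is a version of E[T | σ(X)] with 0 < e < 1 a.s.
    (e : Ω → ℝ)
    (he : e =ᵐ[P] P[T | MeasurableSpace.comap X inferInstance])
    (hpos : ∀ᵐ ω ∂P, 0 < e ω ∧ e ω < 1)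
    -- (iii) integrability
    (hY₁int : Integrable Y₁ P) (hY₀int : Integrable Y₀ P)
    (hint1 : Integrable (fun ω => T ω * Y ω / e ω) P)
    (hint0 : Integrable (fun ω => (1 - T ω) * Y ω / (1 - e ω)) P) :
    (∫ ω, Y₁ ω ∂P = ∫ ω, T ω * Y ω / e ω ∂P) ∧
    (∫ ω, Y₀ ω ∂P = ∫ ω, (1 - T ω) * Y ω / (1 - e ω) ∂P) :=
  aux_ipw2 hX.comap_le P T Y₁ Y₀ hT hY₁ hY₀ hTbin Y hY hindep e he hpos
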